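/- The number of runs in any string of length n is less than n; that is, for every string t of length n, the number of pairs (i,j) with 1 ≤ i ≤ j ≤ n such that t[i..j] is a run of t is strictly less than n. -/

import Mathlib

/-- `p` is a period of the substring `t[i..j]` of the 1-indexed string `t`:
`1 ≤ p ≤ |t[i..j]| = j - i + 1`, and `t[k] = t[k + p]` whenever both positions
lie in `[i..j]` (vacuously, the length is always a period). -/
def IsPeriodOf {α : Type*} (t : ℕ → α) (i j p : ℕ) : Prop :=
  1 ≤ p ∧ p ≤ j + 1 - i ∧ ∀ k, i ≤ k → k + p ≤ j → t (k + p) = t k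

/-- The minimal period of the substring `t[i..j]`. -/
noncomputable def minPeriod {α : Type*} (t : ℕ → α) (i j : ℕ) : ℕ :=
  sInf {p | IsPeriodOf t i j p}

/-- `t[i..j]` is a run of the string `t[1..n]`: its exponent is at least `2`
(i.e. `j - i + 1 ≥ 2 · minPeriod`), and the extensions `t[i-1..j]` (if `i > 1`)
and `t[i..j+1]` (if `j < n`) have strictly larger minimal periods. -/
def IsRun {α : Type*} (t : ℕ → α) (n i j : ℕ) : Prop :=
  1 ≤ i ∧ i ≤ j ∧ j ≤ n ∧
  2 * minPeriod t i j ≤ j + 1 - i ∧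
  (1 < i → minPeriod t i j < minPeriod t (i - 1) j) ∧
  (j < n → minPeriod t i j < minPeriod t i (j + 1))

namespace RunsThm
variable {β : Type*} (lt : β → β → Prop)

def LexLt : List β → List β → Prop
  | _, [] => False
  | [], _ :: _ => True
  | a :: u, b :: v => lt a b ∨ (a = b ∧ LexLt u v)

@[simp] lemma lexLt_nil_right (u : List β) : ¬ LexLt lt u [] := by cases u <;> simp [LexLt]
@[simp] lemma lexLt_nil_cons (b : β) (v : List β) : LexLt lt [] (b :: v) := by simp [LexLt]
@[simp] lemma lexLt_cons_cons (a b : β) (u v : List β) :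
    LexLt lt (a :: u) (b :: v) ↔ lt a b ∨ (a = b ∧ LexLt lt u v) := Iff.rfl

lemma lexLt_asymm (hasym : ∀ a b, lt a b → lt b a → False) :
    ∀ u v : List β, LexLt lt u v → LexLt lt v u → False := by
  intro u
  induction u with
  | nil => intro v h h'; cases v <;> simp_all
  | cons a u ih =>
    intro v h h'
    cases v with
    | nil => simp_all
    | cons b v =>
      simp only [lexLt_cons_cons] at h h'
      rcases h with h | ⟨rfl, h⟩ <;> rcases h' with h' | ⟨e', h'⟩
      · exact hasym _ _ h h'
      · exact hasym _ _ h (e' ▸ h)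
      · exact hasym _ _ h' h'
      · exact ih v h h'

lemma lexLt_irrefl (hasym : ∀ a b, lt a b → lt b a → False) (u : List β) :
    ¬ LexLt lt u u := fun h => lexLt_asymm lt hasym u u h h

lemma lexLt_total (htri : ∀ a b, lt a b ∨ a = b ∨ lt b a) :
    ∀ u v : List β, LexLt lt u v ∨ u = v ∨ LexLt lt v u := by
  intro u
  induction u with
  | nil => intro v; cases v <;> simp
  | cons a u ih =>
    intro v
    cases v with
    | nil => simp
    | cons b v =>
      rcases htri a b with h | rfl | h
      · exact Or.inl (Or.inl h)
      · rcases ih v with h | rfl | h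
        · exact Or.inl (Or.inr ⟨rfl, h⟩)
        · exact Or.inr (Or.inl rfl)
        · exact Or.inr (Or.inr (Or.inr ⟨rfl, h⟩))
      · exact Or.inr (Or.inr (Or.inl h))

lemma lexLt_trans (htrans : ∀ a b c, lt a b → lt b c → lt a c) :
    ∀ u v w : List β, LexLt lt u v → LexLt lt v w → LexLt lt u w := by
  intro u
  induction u with
  | nil =>
    intro v w h h'
    cases w with
    | nil => cases v <;> simp_all
    | cons c w => simp
  | cons a u ih =>
    intro v w h h'
    cases v with
    | nil => simp_all
    | cons b v =>
      cases w with
      | nil => simp_all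
      | cons c w =>
        simp only [lexLt_cons_cons] at *
        rcases h with h | ⟨rfl, h⟩ <;> rcases h' with h' | ⟨rfl, h'⟩
        · exact Or.inl (htrans _ _ _ h h')
        · exact Or.inl h
        · exact Or.inl h'
        · exact Or.inr ⟨rfl, ih v w h h'⟩

/-- first-difference criterion -/
lemma lexLt_of_firstdiff : ∀ (u v : List β) (e : ℕ) (he : e < u.length) (he' : e < v.length),
    (∀ d (hd : d < e), u[d]'(lt_trans hd he) = v[d]'(lt_trans hd he')) →
    lt (u[e]'he) (v[e]'he') → LexLt lt u v := by
  intro u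
  induction u with
  | nil => intro v e he; simp at he
  | cons a u ih =>
    intro v e he he' hagree hlt
    cases v with
    | nil => simp at he'
    | cons b v =>
      cases e with
      | zero => simp_all
      | succ e =>
        have hab : a = b := by have := hagree 0 (by omega); simpa using this
        refine Or.inr ⟨hab, ih v e (by simpa using he) (by simpa using he') ?_ ?_⟩
        · intro d hd; have := hagree (d+1) (by omega); simpa using this
        · simpa using hlt

/-- proper-prefix criterion -/
lemma lexLt_of_prefix : ∀ (u v : List β) (hl : u.length < v.length),
    (∀ d (hd : d < u.length), u[d]'hd = v[d]'(lt_trans hd hl)) → LexLt lt u v := by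
  intro u
  induction u with
  | nil =>
    intro v hl _
    cases v with
    | nil => simp at hl
    | cons b v => simp
  | cons a u ih =>
    intro v hl hagree
    cases v with
    | nil => simp at hl
    | cons b v =>
      have hab : a = b := by have := hagree 0 (Nat.succ_pos _); simpa using this
      refine Or.inr ⟨hab, ih v (by simpa using hl) ?_⟩
      intro d hd; have := hagree (d+1) (Nat.succ_lt_succ hd); simpa using this

/-- inversion -/
lemma lexLt_inv : ∀ (u v : List β), LexLt lt u v →
    (∃ hlen : u.length < v.length, ∀ d (hd : d < u.length), u[d]'hd = v[d]'(lt_trans hd hlen)) ∨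
    ∃ e, ∃ (he : e < u.length) (he' : e < v.length),
      (∀ d (hd : d < e), u[d]'(lt_trans hd he) = v[d]'(lt_trans hd he')) ∧ lt (u[e]'he) (v[e]'he') := by
  intro u
  induction u with
  | nil =>
    intro v h
    cases v with
    | nil => simp_all
    | cons b v => exact Or.inl ⟨by simp, by intro d hd; exact absurd hd (by simp)⟩
  | cons a u ih =>
    intro v h
    cases v with
    | nil => simp_all
    | cons b v =>
      rcases h with h | ⟨rfl, h⟩
      · exact Or.inr ⟨0, Nat.succ_pos _, Nat.succ_pos _, by intro d hd; exact absurd hd (by omega), by simpa using h⟩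
      · rcases ih v h with ⟨h1, h2⟩ | ⟨e, he, he', h1, h2⟩
        · refine Or.inl ⟨Nat.succ_lt_succ h1, ?_⟩
          intro d hd
          cases d with
          | zero => simp
          | succ d => have := h2 d (by simpa using hd); simpa using this
        · refine Or.inr ⟨e+1, Nat.succ_lt_succ he, Nat.succ_lt_succ he', ?_, by simpa using h2⟩
          intro d hd
          cases d with
          | zero => simp
          | succ d => have := h1 d (by omega); simpa using this

lemma lexLt_append_left_iff (hasym : ∀ a b, lt a b → lt b a → False) :
    ∀ (c u v : List β), LexLt lt (c ++ u) (c ++ v) ↔ LexLt lt u v := by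
  intro c
  induction c with
  | nil => simp
  | cons a c ih =>
    intro u v
    simp only [List.cons_append, lexLt_cons_cons, ih u v]
    constructor
    · rintro (h | ⟨-, h⟩)
      · exact absurd h (fun hh => hasym _ _ hh hh)
      · exact h
    · intro h
      refine Or.inr ⟨?_, h⟩
      simp

lemma lexLt_append_right (u v c : List β) (hl : u.length = v.length)
    (h : LexLt lt (u ++ c) (v ++ c)) : LexLt lt u v ∨ u = v := by
  rcases lexLt_inv lt _ _ h with ⟨h1, _⟩ | ⟨e, he, he', h1, h2⟩
  · simp at h1; omega
  · by_cases heu : e < u.length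
    · refine Or.inl (lexLt_of_firstdiff lt u v e heu (by omega) ?_ ?_)
      · intro d hd
        have := h1 d hd
        rwa [List.getElem_append_left (by omega), List.getElem_append_left (by omega)] at this
      · rwa [List.getElem_append_left (by omega), List.getElem_append_left (by omega)] at h2
    · refine Or.inr (List.ext_getElem (by omega) ?_)
      intro d hd hd'
      have := h1 d (by simp at he ⊢; omega)
      rwa [List.getElem_append_left (by omega), List.getElem_append_left (by omega)] at this

/-- extract letter comparison at a known first difference -/
lemma lexLt_extract (hasym : ∀ a b, lt a b → lt b a → False) (u v : List β)
    (h : LexLt lt u v) (e : ℕ) (he : e < u.length)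
    (he' : e < v.length) (hagree : ∀ d (hd : d < e), u[d]'(lt_trans hd he) = v[d]'(lt_trans hd he'))
    (hne : u[e]'he ≠ v[e]'he') : lt (u[e]'he) (v[e]'he') := by
  rcases lexLt_inv lt _ _ h with ⟨h1, h2⟩ | ⟨e', he1, he1', h1, h2⟩
  · exact absurd (h2 e he) hne
  · rcases lt_trichotomy e e' with hee | rfl | hee
    · exact absurd (h1 e hee) hne
    · convert h2 using 2
    · exact absurd ((hagree e' hee) ▸ h2) (fun hh => hasym _ _ hh hh)

end RunsThm

namespace RunsThm
variable {β : Type*}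

/-- The word `s[a] s[a+1] ... s[a+m-1]`. -/
def word (s : ℕ → β) (a m : ℕ) : List β := (List.range m).map fun d => s (a + d)

@[simp] lemma length_word (s : ℕ → β) (a m : ℕ) : (word s a m).length = m := by
  simp [word]

@[simp] lemma getElem_word (s : ℕ → β) (a m d : ℕ) (hd : d < (word s a m).length) :
    (word s a m)[d]'hd = s (a + d) := by
  simp [word]

lemma word_eq_iff (s : ℕ → β) (a a' m : ℕ) :
    word s a m = word s a' m ↔ ∀ d < m, s (a + d) = s (a' + d) := by
  constructor
  · intro h d hd
    have h1 : (word s a m)[d]? = (word s a' m)[d]? := by rw [h]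
    simp only [word, List.getElem?_map, List.getElem?_range, hd, Option.map_some] at h1
    simpa using h1
  · intro h
    apply List.ext_getElem (by simp)
    intro d hd hd'
    simpa using h d (by simpa using hd)

lemma drop_word (s : ℕ → β) (a m q : ℕ) :
    (word s a m).drop q = word s (a + q) (m - q) := by
  apply List.ext_getElem (by simp)
  intro d hd hd'
  simp only [List.getElem_drop, getElem_word]
  ring_nf

lemma take_word (s : ℕ → β) (a m q : ℕ) (hq : q ≤ m) :
    (word s a m).take q = word s a q := by
  apply List.ext_getElem (by simp; omega)
  intro d hd hd'
  simp only [List.getElem_take, getElem_word]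

/-- strict minimum of an injective list-valued function over a nonempty finset -/
lemma exists_strict_min (lt : β → β → Prop)
    (htri : ∀ a b, lt a b ∨ a = b ∨ lt b a)
    (htrans : ∀ a b c, lt a b → lt b c → lt a c)
    (S : Finset ℕ) (w : ℕ → List β) (hS : S.Nonempty)
    (hinj : ∀ a ∈ S, ∀ b ∈ S, a ≠ b → w a ≠ w b) :
    ∃ k ∈ S, ∀ k' ∈ S, k' ≠ k → LexLt lt (w k) (w k') := by
  classical
  revert hS hinj
  induction S using Finset.induction_on with
  | empty => intro h _; exact absurd h (by simp)
  | @insert a S ha ih =>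
    intro _ hinj
    by_cases h0 : S.Nonempty
    · obtain ⟨k0, hk0S, hmin⟩ := ih h0
        (fun x hx y hy => hinj x (Finset.mem_insert_of_mem hx) y (Finset.mem_insert_of_mem hy))
      have hak0 : a ≠ k0 := fun h => ha (h ▸ hk0S)
      rcases lexLt_total lt htri (w a) (w k0) with h | h | h
      · refine ⟨a, Finset.mem_insert_self _ _, ?_⟩
        intro k' hk' hne
        rcases Finset.mem_insert.mp hk' with rfl | hk'S
        · exact absurd rfl hne
        · by_cases hkk : k' = k0
          · exact hkk ▸ h
          · exact lexLt_trans lt htrans _ _ _ h (hmin k' hk'S hkk)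
      · exact absurd h (hinj a (Finset.mem_insert_self _ _) k0
          (Finset.mem_insert_of_mem hk0S) hak0)
      · refine ⟨k0, Finset.mem_insert_of_mem hk0S, ?_⟩
        intro k' hk' hne
        rcases Finset.mem_insert.mp hk' with rfl | hk'S
        · exact h
        · exact hmin k' hk'S hne
    · rw [Finset.not_nonempty_iff_eq_empty] at h0
      subst h0
      refine ⟨a, Finset.mem_insert_self _ _, ?_⟩
      intro k' hk' hne
      simp at hk'
      exact absurd hk' hne

/-- A word that is strictly smaller than all its (distinct) rotations is Lyndon:
smaller than each of its proper suffixes. -/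
def IsLyndonW (lt : β → β → Prop) (w : List β) : Prop :=
  ∀ m, 0 < m → m < w.length → LexLt lt w (w.drop m)

lemma isLyndonW_of_min_rotation (lt : β → β → Prop)
    (hasym : ∀ a b, lt a b → lt b a → False)
    (htri : ∀ a b, lt a b ∨ a = b ∨ lt b a)
    (w : List β)
    (h : ∀ m, 0 < m → m < w.length → LexLt lt w (w.drop m ++ w.take m)) :
    IsLyndonW lt w := by
  intro m hm hml
  rcases lexLt_total lt htri w (w.drop m) with hlt | heq | hgt
  · exact hlt
  · exfalso
    have := congrArg List.length heq
    simp at this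
    omega
  · rcases lexLt_inv lt _ _ hgt with ⟨h1, h2⟩ | ⟨e, he, he', h1, h2⟩
    · -- prefix case: w.drop m is a prefix of w
      exfalso
      set L := w.length with hL
      have hdl : (w.drop m).length = L - m := by simp [hL]
      have hbtake : w.drop m = w.take (L - m) := by
        apply List.ext_getElem (by simp only [List.length_drop, List.length_take]; omega)
        intro d hd hd'
        have h3 := h2 d (by simpa using hd)
        simp only [List.getElem_take]
        exact h3
      -- w = a ++ b with a = take m, b = drop m ; also w = b ++ y with y = drop (L - m)
      have hw1 : w = w.take m ++ w.drop m := (List.take_append_drop m w).symm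
      have hw2 : w = w.drop m ++ w.drop (L - m) := by
        nth_rewrite 1 [← List.take_append_drop (L - m) w]
        rw [hbtake]
      -- from rotation m : LexLt w (drop m ++ take m); rewrite w = drop m ++ y
      have hr1 : LexLt lt (w.drop (L - m)) (w.take m) := by
        have h4 := h m hm hml
        nth_rewrite 1 [hw2] at h4
        exact (lexLt_append_left_iff lt hasym _ _ _).mp h4
      -- from rotation (L - m) : LexLt w (drop (L-m) ++ take (L-m)) = LexLt w (y ++ b)
      have hr2 : LexLt lt (w.take m ++ w.drop m) (w.drop (L - m) ++ w.drop m) := by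
        have h4 := h (L - m) (by omega) (by omega)
        rw [← hbtake] at h4
        nth_rewrite 1 [hw1] at h4
        exact h4
      have hlen : (w.take m).length = (w.drop (L - m)).length := by
        simp; omega
      rcases lexLt_append_right lt _ _ _ hlen hr2 with h3 | h3
      · exact lexLt_asymm lt hasym _ _ h3 hr1
      · rw [h3] at hr1; exact lexLt_asymm lt hasym _ _ hr1 hr1
    · -- difference case: rotation m beats w, contradiction
      exfalso
      have hcomp : LexLt lt (w.drop m ++ w.take m) w := by
        refine lexLt_of_firstdiff lt _ _ e (by simp at he ⊢; omega) he' ?_ ?_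
        · intro d hd
          rw [List.getElem_append_left (by omega)]
          exact h1 d hd
        · rw [List.getElem_append_left (by omega)]
          exact h2
      exact lexLt_asymm lt hasym _ _ (h m hm hml) hcomp

end RunsThm

namespace RunsThm
variable {β : Type*}

lemma period_iter (s : ℕ → β) (i j p : ℕ)
    (hper : ∀ x, i ≤ x → x + p ≤ j → s (x + p) = s x) :
    ∀ c x, i ≤ x → x + c * p ≤ j → s (x + c * p) = s x := by
  intro c
  induction c with
  | zero => simp
  | succ c ih =>
    intro x hx hxc
    have he : x + (c + 1) * p = x + c * p + p := by ring
    rw [he, hper _ (by omega) (by omega), ih x hx (by omega)]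

/-- congruent positions inside the periodic zone carry equal letters -/
lemma period_congr (s : ℕ → β) (i j p : ℕ)
    (hper : ∀ x, i ≤ x → x + p ≤ j → s (x + p) = s x) :
    ∀ x y, i ≤ x → x ≤ j → i ≤ y → y ≤ j → x ≡ y [MOD p] → s x = s y := by
  have aux : ∀ x y, i ≤ x → i ≤ y → y ≤ j → x ≤ y → x ≡ y [MOD p] → s x = s y := by
    intro x y hx hy hyj hxy hmod
    have hdvd : p ∣ y - x := (Nat.modEq_iff_dvd' hxy).mp hmod
    obtain ⟨c, hc⟩ := hdvd
    have hy' : y = x + c * p := by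
      rw [Nat.mul_comm] at hc
      omega
    rw [hy', period_iter s i j p hper c x hx (by omega)]
  intro x y hx hxj hy hyj hmod
  rcases le_total x y with h | h
  · exact aux x y hx hy hyj h hmod
  · exact (aux y x hy hx hxj h hmod.symm).symm

/-- representative of a residue class in a window of length `p` starting at `a` -/
lemma exists_rep (a x p : ℕ) (hp : 0 < p) :
    ∃ y, a ≤ y ∧ y < a + p ∧ y ≡ x [MOD p] := by
  refine ⟨a + (x + p * a - a) % p, by omega, by have := Nat.mod_lt (x + p * a - a) hp; omega, ?_⟩
  have hle : a ≤ p * a := Nat.le_mul_of_pos_left a hp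
  calc a + (x + p * a - a) % p ≡ a + (x + p * a - a) [MOD p] :=
        Nat.ModEq.add_left a (Nat.mod_modEq _ p)
    _ = x + p * a := by omega
    _ ≡ x [MOD p] := by
        unfold Nat.ModEq
        simp [Nat.add_mul_mod_self_left]

/-- A "directed run": maximal periodic fragment with exponent ≥ 2, whose
right extension decreases w.r.t. `lt`. -/
structure DRun (lt : β → β → Prop) (s : ℕ → β) (n i j p : ℕ) : Prop where
  hi : 1 ≤ i
  hjn : j ≤ n
  hp : 1 ≤ p
  hexp : i + 2 * p ≤ j + 1
  hper : ∀ x, i ≤ x → x + p ≤ j → s (x + p) = s x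
  hmin : ∀ q, 1 ≤ q → q < p → ∃ x, i ≤ x ∧ x + q ≤ j ∧ s (x + q) ≠ s x
  hdir : j < n → lt (s (j + 1)) (s (j + 1 - p))
  hleft : 1 < i → s (i - 1 + p) ≠ s (i - 1)
  hrb : j < n → s (j + 1) ≠ s (j + 1 - p)

namespace DRun

variable {lt lt' : β → β → Prop} {s : ℕ → β} {n i j p i' j' p' k : ℕ}

lemma A1 (R : DRun lt s n i j p) {x y : ℕ} (hx : i ≤ x) (hxj : x ≤ j)
    (hy : i ≤ y) (hyj : y ≤ j) (hmod : x ≡ y [MOD p]) : s x = s y :=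
  period_congr s i j p R.hper x y hx hxj hy hyj hmod

lemma words_ne (R : DRun lt s n i j p) :
    ∀ k1 k2, i < k1 → k1 ≤ i + p → i < k2 → k2 ≤ i + p → k1 ≠ k2 →
      word s k1 p ≠ word s k2 p := by
  have aux : ∀ k1 k2, i < k1 → k1 ≤ i + p → i < k2 → k2 ≤ i + p → k1 < k2 →
      word s k1 p ≠ word s k2 p := by
    intro k1 k2 h1 h2 h3 h4 hlt heq
    have hexp := R.hexp
    have hpp := R.hp
    set m := k2 - k1 with hm
    have hm1 : 1 ≤ m := by omega
    have hmp : m < p := by omega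
    rw [word_eq_iff] at heq
    -- m is a period of [i..j]
    have hperm : ∀ x, i ≤ x → x + m ≤ j → s (x + m) = s x := by
      intro x hx hxm
      obtain ⟨y, hy1, hy2, hy3⟩ := exists_rep k1 x p (by omega)
      have hyj : y ≤ j := by omega
      have e1 : s x = s y := R.A1 hx (by omega) (by omega) hyj hy3.symm
      have e2 : s (x + m) = s (y + m) :=
        R.A1 (by omega) hxm (by omega) (by omega) (Nat.ModEq.add_right m hy3.symm)
      have e3 : s y = s (y + m) := by
        have := heq (y - k1) (by omega)
        have h5 : k1 + (y - k1) = y := by omega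
        have h6 : k2 + (y - k1) = y + m := by omega
        rw [h5, h6] at this
        exact this
      rw [e1, e2, ← e3]
    obtain ⟨x, hx1, hx2, hx3⟩ := R.hmin m hm1 hmp
    exact hx3 (hperm x hx1 hx2)
  intro k1 k2 h1 h2 h3 h4 hne
  rcases lt_or_gt_of_ne hne with h | h
  · exact aux k1 k2 h1 h2 h3 h4 h
  · exact fun heq => aux k2 k1 h3 h4 h1 h2 h heq.symm

end DRun

/-- `k` is the (unique) position in `(i, i+p]` whose length-`p` factor is
strictly minimal w.r.t. the lexicographic order induced by `lt`. -/
def MinAt (lt : β → β → Prop) (s : ℕ → β) (i p k : ℕ) : Prop :=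
  (i < k ∧ k ≤ i + p) ∧
    ∀ k', i < k' → k' ≤ i + p → k' ≠ k → LexLt lt (word s k p) (word s k' p)

namespace DRun

variable {lt lt' : β → β → Prop} {s : ℕ → β} {n i j p i' j' p' k : ℕ}

lemma exists_minAt (R : DRun lt s n i j p)
    (htri : ∀ a b, lt a b ∨ a = b ∨ lt b a)
    (htrans : ∀ a b c, lt a b → lt b c → lt a c) :
    ∃ k, MinAt lt s i p k := by
  obtain ⟨k, hkS, hmin⟩ := exists_strict_min lt htri htrans (Finset.Ioc i (i + p))
    (fun k' => word s k' p) (Finset.nonempty_Ioc.mpr (by have := R.hp; omega))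
    (fun a ha b hb hab => R.words_ne a b (Finset.mem_Ioc.mp ha).1 (Finset.mem_Ioc.mp ha).2
      (Finset.mem_Ioc.mp hb).1 (Finset.mem_Ioc.mp hb).2 hab)
  rw [Finset.mem_Ioc] at hkS
  exact ⟨k, hkS, fun k' h1 h2 hne => hmin k' (Finset.mem_Ioc.mpr ⟨h1, h2⟩) hne⟩

lemma k_bounds (R : DRun lt s n i j p) (M : MinAt lt s i p k) :
    i < k ∧ k + p ≤ j + 1 ∧ k ≤ j ∧ 2 ≤ k := by
  obtain ⟨⟨h1, h2⟩, -⟩ := M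
  have := R.hexp
  have := R.hp
  have := R.hi
  exact ⟨h1, by omega, by omega, by omega⟩

/-- the rotation of the minimal factor by `m` equals the factor at the
window representative of `k + m` -/
lemma rot_eq_word (R : DRun lt s n i j p) (M : MinAt lt s i p k)
    {m k'' : ℕ} (hm : m ≤ p) (h1 : i < k'') (h2 : k'' ≤ i + p)
    (h3 : k'' ≡ k + m [MOD p]) :
    (word s k p).drop m ++ (word s k p).take m = word s k'' p := by
  obtain ⟨⟨hk1, hk2⟩, -⟩ := M
  have hexp := R.hexp
  apply List.ext_getElem (by simp; omega)
  intro d hd hd'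
  have hdp : d < p := by simpa using hd'
  rw [getElem_word]
  by_cases hcase : d < p - m
  · rw [List.getElem_append_left (by simp; omega)]
    simp only [drop_word, getElem_word]
    exact R.A1 (by omega) (by omega) (by omega) (by omega)
      (Nat.ModEq.add_right d h3.symm)
  · rw [List.getElem_append_right (by simp; omega)]
    simp only [take_word s k p m hm, getElem_word, List.length_drop, length_word]
    refine R.A1 (by omega) (by omega) (by omega) (by omega) ?_
    -- k + (d - (p - m)) ≡ k'' + d [MOD p]
    have h4 : k'' + d ≡ k + m + d [MOD p] := Nat.ModEq.add_right d h3
    have h5 : k + m + d = (k + (d - (p - m))) + p := by omega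
    rw [h5] at h4
    have h6 : (k + (d - (p - m))) + p ≡ k + (d - (p - m)) [MOD p] := by
      unfold Nat.ModEq
      simp [Nat.add_mod_right]
    exact (h4.trans h6).symm

lemma lyndon (R : DRun lt s n i j p) (M : MinAt lt s i p k)
    (hasym : ∀ a b, lt a b → lt b a → False)
    (htri : ∀ a b, lt a b ∨ a = b ∨ lt b a) :
    IsLyndonW lt (word s k p) := by
  obtain ⟨⟨hk1, hk2⟩, hmin⟩ := M
  apply isLyndonW_of_min_rotation lt hasym htri
  intro m hm hml
  rw [length_word] at hml
  obtain ⟨k'', h1, h2, h3⟩ := exists_rep (i + 1) (k + m) p (by omega)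
  have hrot := R.rot_eq_word ⟨⟨hk1, hk2⟩, hmin⟩ (le_of_lt hml) (by omega) (by omega) h3
  rw [hrot]
  have hne : k'' ≠ k := by
    intro heq
    subst heq
    have : k'' ≡ k'' + m [MOD p] := h3
    have hdvd : p ∣ k'' + m - k'' := (Nat.modEq_iff_dvd' (by omega)).mp this
    simp only [Nat.add_sub_cancel_left] at hdvd
    have := Nat.le_of_dvd hm hdvd
    omega
  exact hmin k'' (by omega) (by omega) hne

lemma no_long_lyndon (R : DRun lt s n i j p) (M : MinAt lt s i p k)
    (hasym : ∀ a b, lt a b → lt b a → False) :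
    ∀ m, p < m → k + m ≤ n + 1 → ¬ IsLyndonW lt (word s k m) := by
  intro m hm hmn hLyn
  obtain ⟨hk1, hkp, hkj, hk2⟩ := R.k_bounds M
  have hp := R.hp
  have h1 : LexLt lt (word s k m) ((word s k m).drop p) :=
    hLyn p hp (by simp; omega)
  rw [drop_word] at h1
  by_cases hcase : k + m ≤ j + 1
  · -- fully inside the periodic zone: drop is a proper prefix
    have h2 : LexLt lt (word s (k + p) (m - p)) (word s k m) := by
      refine lexLt_of_prefix lt _ _ (by simp; omega) ?_
      intro d hd
      rw [getElem_word, getElem_word]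
      have he : k + p + d = (k + d) + p := by ring
      rw [he, R.hper (k + d) (by omega) (by simp at hd; omega)]
    exact lexLt_asymm lt hasym _ _ h1 h2
  · push_neg at hcase
    have hjn : j < n := by omega
    have hdir := R.hdir hjn
    set e := j + 1 - p - k with he
    have h2 : LexLt lt (word s (k + p) (m - p)) (word s k m) := by
      refine lexLt_of_firstdiff lt _ _ e (by simp; omega) (by simp; omega) ?_ ?_
      · intro d hd
        rw [getElem_word, getElem_word]
        have heq : k + p + d = (k + d) + p := by ring
        rw [heq, R.hper (k + d) (by omega) (by omega)]
      · rw [getElem_word, getElem_word]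
        have e1 : k + p + e = j + 1 := by omega
        have e2 : k + e = j + 1 - p := by omega
        rw [e1, e2]
        exact hdir
    exact lexLt_asymm lt hasym _ _ h1 h2

lemma const_of_p1 (R : DRun lt s n i j 1) {x : ℕ} (hx : i ≤ x) (hxj : x ≤ j) :
    s x = s i := by
  have h := R.hexp
  exact R.A1 hx hxj le_rfl (by omega) (Nat.modEq_one)

end DRun
end RunsThm

namespace RunsThm
namespace DRun
variable {β : Type*} {lt lt' : β → β → Prop} {s : ℕ → β} {n i j p i' j' p' k : ℕ}

/-- first non-repeating offset of the minimal factor -/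
lemma exists_q (R : DRun lt s n i j p) (hk1 : i < k) (hk2 : k ≤ i + p) (hp2 : 2 ≤ p) :
    ∃ q, 2 ≤ q ∧ q ≤ p ∧ s (k + q - 1) ≠ s k ∧
      ∀ q', 2 ≤ q' → q' < q → s (k + q' - 1) = s k := by
  classical
  have hexp := R.hexp
  have hex : ∃ q, 2 ≤ q ∧ q ≤ p ∧ s (k + q - 1) ≠ s k := by
    by_contra hcon
    push_neg at hcon
    have hconst : ∀ x, k ≤ x → x ≤ k + p - 1 → s x = s k := by
      intro x hx hxp
      rcases Nat.eq_or_lt_of_le hx with heq | hlt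
      · rw [← heq]
      · have h5 := hcon (x - k + 1) (by omega) (by omega)
        have he : k + (x - k + 1) - 1 = x := by omega
        rwa [he] at h5
    have hval : ∀ z, i ≤ z → z ≤ j → s z = s k := by
      intro z hz hzj
      obtain ⟨y, hy1, hy2, hy3⟩ := exists_rep k z p (by omega)
      have h5 : s z = s y := R.A1 hz hzj (by omega) (by omega) hy3.symm
      rw [h5, hconst y (by omega) (by omega)]
    have hww : word s (i + 1) p = word s (i + 2) p := by
      rw [word_eq_iff]
      intro d hd
      rw [hval (i + 1 + d) (by omega) (by omega), hval (i + 2 + d) (by omega) (by omega)]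
    exact R.words_ne (i + 1) (i + 2) (by omega) (by omega) (by omega) (by omega)
      (by omega) hww
  refine ⟨Nat.find hex, (Nat.find_spec hex).1, (Nat.find_spec hex).2.1,
    (Nat.find_spec hex).2.2, ?_⟩
  intro q' h2 hlt
  by_contra hne
  exact Nat.find_min hex hlt ⟨h2, by
    have := (Nat.find_spec hex).2.1
    omega, hne⟩

/-- extraction of a letter inequality from the minimality of the factor at `k` -/
lemma min_extract (R : DRun lt s n i j p) (M : MinAt lt s i p k)
    (hasym : ∀ a b, lt a b → lt b a → False)
    (y e : ℕ) (hy1 : i < y) (hy2 : y ≤ i + p) (he : e < p)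
    (hagree : ∀ d, d < e → s (k + d) = s (y + d))
    (hne : s (k + e) ≠ s (y + e)) : lt (s (k + e)) (s (y + e)) := by
  have hyk : y ≠ k := by rintro rfl; exact hne rfl
  have hlex := M.2 y hy1 hy2 hyk
  have h := lexLt_extract lt hasym (word s k p) (word s y p) hlex e
    (by simpa using he) (by simpa using he) ?_ ?_
  · simpa using h
  · intro d hd
    simpa using hagree d hd
  · simpa using hne

lemma same_order (hasym : ∀ a b, lt a b → lt b a → False)
    (htri : ∀ a b, lt a b ∨ a = b ∨ lt b a)
    (R : DRun lt s n i j p) (R' : DRun lt s n i' j' p')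
    (M : MinAt lt s i p k) (M' : MinAt lt s i' p' k) : i = i' ∧ j = j' := by
  obtain ⟨hk1, hkp, hkj, hk2⟩ := R.k_bounds M
  obtain ⟨hk1', hkp', hkj', hk2'⟩ := R'.k_bounds M'
  have hexpR := R.hexp
  have hexpR' := R'.hexp
  have hiR := R.hi
  have hiR' := R'.hi
  have hjnR := R.hjn
  have hjnR' := R'.hjn
  have hpp : p = p' := by
    rcases lt_trichotomy p p' with h | h | h
    · exact absurd (R'.lyndon M' hasym htri)
        (R.no_long_lyndon M hasym p' h (by omega))
    · exact h
    · exact absurd (R.lyndon M hasym htri)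
        (R'.no_long_lyndon M' hasym p h (by omega))
  subst hpp
  have hii : i = i' := by
    rcases lt_trichotomy i i' with h | h | h
    · exact absurd (R.hper (i' - 1) (by omega) (by omega)) (R'.hleft (by omega))
    · exact h
    · exact absurd (R'.hper (i - 1) (by omega) (by omega)) (R.hleft (by omega))
  subst hii
  refine ⟨rfl, ?_⟩
  rcases lt_trichotomy j j' with h | h | h
  · exfalso
    apply R.hrb (by omega)
    have hx := R'.hper (j + 1 - p) (by omega) (by omega)
    have he : (j + 1 - p) + p = j + 1 := by omega
    rwa [he] at hx
  · exact h
  · exfalso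
    apply R'.hrb (by omega)
    have hx := R.hper (j' + 1 - p) (by omega) (by omega)
    have he : (j' + 1 - p) + p = j' + 1 := by omega
    rwa [he] at hx

/-- mixed case, `p = 1 < p'` -/
lemma mixed_one (hflip : ∀ a b, lt' a b ↔ lt b a)
    (hasym : ∀ a b, lt a b → lt b a → False)
    (R : DRun lt s n i j 1) (R' : DRun lt' s n i' j' p') (hp2 : 2 ≤ p')
    (M : MinAt lt s i 1 k) (M' : MinAt lt' s i' p' k) : False := by
  have hasym' : ∀ a b, lt' a b → lt' b a → False := by
    intro a b h1 h2
    rw [hflip] at h1 h2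
    exact hasym _ _ h2 h1
  obtain ⟨hk1, hkp, hkj, hk2⟩ := R.k_bounds M
  obtain ⟨hk1', hkp', hkj', hk2'⟩ := R'.k_bounds M'
  have hexp := R.hexp
  have hexp' := R'.hexp
  have hjn' := R'.hjn
  have hc : ∀ x, i ≤ x → x ≤ j → s x = s k := by
    intro x hx hxj
    rw [R.const_of_p1 hx hxj, ← R.const_of_p1 (le_of_lt hk1) hkj]
  obtain ⟨q, hq2, hqp, hqne, hqmin⟩ := R'.exists_q M'.1.1 M'.1.2 hp2
  have hjq : j + 1 ≤ k + q - 1 := by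
    by_contra hcon
    exact hqne (hc (k + q - 1) (by omega) (by omega))
  have hjn : j < n := by omega
  have heq : k + q - 1 = j + 1 := by
    by_contra hcon
    have h5 := hqmin (j + 2 - k) (by omega) (by omega)
    have he : k + (j + 2 - k) - 1 = j + 1 := by omega
    rw [he] at h5
    apply R.hrb hjn
    have he2 : j + 1 - 1 = j := by omega
    rw [he2, h5, hc j (by omega) (by omega)]
  have hdne : s (j + 1) ≠ s k := by rw [← heq]; exact hqne
  have hjj' : j + 1 ≤ j' := by omega
  -- (A) : lt' (s k) (s (j+1)) via the rotation at the class of k+1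
  have hA : lt' (s k) (s (j + 1)) := by
    obtain ⟨y, hy1, hy2, hy3⟩ := exists_rep (i' + 1) (k + 1) p' (by omega)
    have hyv : ∀ d, d ≤ q - 2 → s (y + d) = s (k + 1 + d) := by
      intro d hd
      exact R'.A1 (by omega) (by omega) (by omega) (by omega)
        (Nat.ModEq.add_right d hy3)
    have hgoal := R'.min_extract M' hasym' y (q - 2) (by omega) (by omega) (by omega)
      ?_ ?_
    · have e1 : s (k + (q - 2)) = s k := hc (k + (q - 2)) (by omega) (by omega)
      have e2 : s (y + (q - 2)) = s (j + 1) := by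
        rw [hyv (q - 2) le_rfl]
        congr 1
        omega
      rwa [e1, e2] at hgoal
    · intro d hd
      have e1 : s (k + d) = s k := hc (k + d) (by omega) (by omega)
      have e2 : s (y + d) = s k := by
        rw [hyv d (by omega)]
        exact hc (k + 1 + d) (by omega) (by omega)
      rw [e1, e2]
    · have e1 : s (k + (q - 2)) = s k := hc (k + (q - 2)) (by omega) (by omega)
      have e2 : s (y + (q - 2)) = s (j + 1) := by
        rw [hyv (q - 2) le_rfl]
        congr 1
        omega
      rw [e1, e2]
      exact fun hcon => hdne hcon.symm
  -- (B) : lt' (s (j+1)) (s k) via the rotation at the class of k-1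
  have hB : lt' (s (j + 1)) (s k) := by
    obtain ⟨y, hy1, hy2, hy3⟩ := exists_rep (i' + 1) (k - 1 + p') p' (by omega)
    have hy3' : y ≡ k - 1 [MOD p'] := by
      refine hy3.trans ?_
      unfold Nat.ModEq
      simp [Nat.add_mod_right]
    have hyv : ∀ d, d ≤ q - 1 → s (y + d) = s (k - 1 + d) := by
      intro d hd
      exact R'.A1 (by omega) (by omega) (by omega) (by omega)
        (Nat.ModEq.add_right d hy3')
    have hgoal := R'.min_extract M' hasym' y (q - 1) (by omega) (by omega) (by omega)
      ?_ ?_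
    · have e1 : s (k + (q - 1)) = s (j + 1) := by congr 1; omega
      have e2 : s (y + (q - 1)) = s k := by
        rw [hyv (q - 1) le_rfl]
        exact hc (k - 1 + (q - 1)) (by omega) (by omega)
      rwa [e1, e2] at hgoal
    · intro d hd
      have e1 : s (k + d) = s k := hc (k + d) (by omega) (by omega)
      have e2 : s (y + d) = s k := by
        rw [hyv d (by omega)]
        exact hc (k - 1 + d) (by omega) (by omega)
      rw [e1, e2]
    · have e1 : s (k + (q - 1)) = s (j + 1) := by congr 1; omega
      have e2 : s (y + (q - 1)) = s k := by
        rw [hyv (q - 1) le_rfl]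
        exact hc (k - 1 + (q - 1)) (by omega) (by omega)
      rw [e1, e2]
      exact hdne
  exact hasym' _ _ hA hB

/-- mixed case, `2 ≤ p` and `2 ≤ p'` -/
lemma mixed_two (hflip : ∀ a b, lt' a b ↔ lt b a)
    (hasym : ∀ a b, lt a b → lt b a → False)
    (R : DRun lt s n i j p) (R' : DRun lt' s n i' j' p') (hp2 : 2 ≤ p) (hp2' : 2 ≤ p')
    (M : MinAt lt s i p k) (M' : MinAt lt' s i' p' k) : False := by
  have hasym' : ∀ a b, lt' a b → lt' b a → False := by
    intro a b h1 h2
    rw [hflip] at h1 h2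
    exact hasym _ _ h2 h1
  obtain ⟨hk1, hkp, hkj, hk2⟩ := R.k_bounds M
  obtain ⟨hk1', hkp', hkj', hk2'⟩ := R'.k_bounds M'
  have hexp := R.hexp
  have hexp' := R'.hexp
  obtain ⟨q, hq2, hqp, hqne, hqmin⟩ := R.exists_q M.1.1 M.1.2 hp2
  obtain ⟨q', hq2', hqp', hqne', hqmin'⟩ := R'.exists_q M'.1.1 M'.1.2 hp2'
  have hqq : q = q' := by
    rcases lt_trichotomy q q' with h | h | h
    · exact absurd (hqmin' q hq2 h) hqne
    · exact h
    · exact absurd (hqmin q' hq2' h) hqne'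
  subst hqq
  have hcmp : ∀ (lt0 : β → β → Prop) i0 j0 p0, DRun lt0 s n i0 j0 p0 →
      MinAt lt0 s i0 p0 k → (∀ a b, lt0 a b → lt0 b a → False) → 2 ≤ p0 → q ≤ p0 →
      (∀ q0, 2 ≤ q0 → q0 < q → s (k + q0 - 1) = s k) →
      lt0 (s k) (s (k + q - 1)) := by
    intro lt0 i0 j0 p0 R0 M0 hasym0 hp20 hqp0 hqmin0
    obtain ⟨hk10, hkp0, hkj0, hk20⟩ := R0.k_bounds M0
    have hexp0 := R0.hexp
    obtain ⟨y, hy1, hy2, hy3⟩ := exists_rep (i0 + 1) (k + q - 1) p0 (by omega)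
    have hgoal := R0.min_extract M0 hasym0 y 0 (by omega) (by omega) (by omega)
      (by intro d hd; exact absurd hd (by omega)) ?_
    · have e2 : s (y + 0) = s (k + q - 1) := by
        rw [Nat.add_zero]
        exact R0.A1 (by omega) (by omega) (by omega) (by omega) hy3
      rw [Nat.add_zero] at hgoal
      rwa [e2] at hgoal
    · have e2 : s (y + 0) = s (k + q - 1) := by
        rw [Nat.add_zero]
        exact R0.A1 (by omega) (by omega) (by omega) (by omega) hy3
      rw [Nat.add_zero, e2]
      exact fun hcon => hqne hcon.symm
  have h1 : lt (s k) (s (k + q - 1)) := hcmp lt i j p R M hasym hp2 hqp hqmin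
  have h2 : lt' (s k) (s (k + q - 1)) := hcmp lt' i' j' p' R' M' hasym' hp2' hqp' hqmin'
  rw [hflip] at h2
  exact hasym _ _ h1 h2

/-- the full mixed case -/
lemma mixed_main (hflip : ∀ a b, lt' a b ↔ lt b a)
    (hasym : ∀ a b, lt a b → lt b a → False)
    (R : DRun lt s n i j p) (R' : DRun lt' s n i' j' p')
    (M : MinAt lt s i p k) (M' : MinAt lt' s i' p' k)
    (hone : j < n ∨ j' < n) : False := by
  have hasym' : ∀ a b, lt' a b → lt' b a → False := by
    intro a b h1 h2
    rw [hflip] at h1 h2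
    exact hasym _ _ h2 h1
  have hflip' : ∀ a b, lt a b ↔ lt' b a := by
    intro a b
    rw [hflip]
  have hp := R.hp
  have hp' := R'.hp
  rcases Nat.lt_or_ge p 2 with hp1 | hp2
  · -- p = 1
    have hp1 : p = 1 := by omega
    subst hp1
    rcases Nat.lt_or_ge p' 2 with hp1' | hp2'
    · -- p' = 1 : both runs are maximal constant blocks at the same spot
      have hp1' : p' = 1 := by omega
      subst hp1'
      obtain ⟨hk1, hkp, hkj, hk2⟩ := R.k_bounds M
      obtain ⟨hk1', hkp', hkj', hk2'⟩ := R'.k_bounds M'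
      have hii : i = i' := by
        have h1 := M.1
        have h2 := M'.1
        omega
      subst hii
      have hjj : j = j' := by
        rcases lt_trichotomy j j' with h | h | h
        · exfalso
          apply R.hrb (by have := R'.hjn; omega)
          have hx := R'.hper j (by omega) (by omega)
          have he : j + 1 - 1 = j := by omega
          rw [he]
          rw [hx]
        · exact h
        · exfalso
          apply R'.hrb (by have := R.hjn; omega)
          have hx := R.hper j' (by omega) (by omega)
          have he : j' + 1 - 1 = j' := by omega
          rw [he]
          rw [hx]
      subst hjj
      have hjn : j < n := by tauto
      have h1 := R.hdir hjn
      have h2 := R'.hdir hjn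
      rw [hflip] at h2
      exact hasym _ _ h1 h2
    · exact mixed_one hflip hasym R R' hp2' M M'
  · rcases Nat.lt_or_ge p' 2 with hp1' | hp2'
    · have hp1' : p' = 1 := by omega
      subst hp1'
      exact mixed_one hflip' hasym' R' R hp2 M' M
    · exact mixed_two hflip hasym R R' hp2 hp2' M M'

end DRun
end RunsThm

namespace RunsThm

/-- choice of a minimal-factor position -/
noncomputable def pick {β : Type*} (lt : β → β → Prop) (s : ℕ → β) (i p : ℕ) : ℕ :=
  Classical.epsilon (MinAt lt s i p)

variable {α : Type*} [LinearOrder α]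

lemma isRun_toDRun (t : ℕ → α) (n i j : ℕ) (h : IsRun t n i j) :
    ((n ≤ j ∨ t (j + 1) < t (j + 1 - minPeriod t i j)) →
      DRun (fun a b : α => a < b) t n i j (minPeriod t i j)) ∧
    (¬(n ≤ j ∨ t (j + 1) < t (j + 1 - minPeriod t i j)) →
      DRun (fun a b : α => b < a) t n i j (minPeriod t i j)) := by
  obtain ⟨h1, hij, hjn, hexp, hL, hR⟩ := h
  set p := minPeriod t i j with hdefp
  have hne : {q | IsPeriodOf t i j q}.Nonempty := by
    refine ⟨j + 1 - i, by omega, le_rfl, ?_⟩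
    intro x hx hxj
    omega
  have hmem : IsPeriodOf t i j p := Nat.sInf_mem hne
  obtain ⟨hp1, hple, hper⟩ := hmem
  have hexp' : i + 2 * p ≤ j + 1 := by omega
  have hmin : ∀ q, 1 ≤ q → q < p → ∃ x, i ≤ x ∧ x + q ≤ j ∧ t (x + q) ≠ t x := by
    intro q hq1 hqp
    by_contra hcon
    push_neg at hcon
    have : p ≤ q := Nat.sInf_le ⟨hq1, by omega, fun x hx hxj => hcon x hx hxj⟩
    omega
  have hrbNE : j < n → t (j + 1) ≠ t (j + 1 - p) := by
    intro hjn' hcon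
    have hmemR : IsPeriodOf t i (j + 1) p := by
      refine ⟨hp1, by omega, ?_⟩
      intro x hx hxj
      rcases Nat.lt_or_ge (x + p) (j + 1) with hc | hc
      · exact hper x hx (by omega)
      · have e1 : x + p = j + 1 := by omega
        have e2 : x = j + 1 - p := by omega
        rw [e1, e2, hcon]
    have : minPeriod t i (j + 1) ≤ p := Nat.sInf_le hmemR
    have := hR hjn'
    omega
  have hleftNE : 1 < i → t (i - 1 + p) ≠ t (i - 1) := by
    intro hi' hcon
    have hmemL : IsPeriodOf t (i - 1) j p := by
      refine ⟨hp1, by omega, ?_⟩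
      intro x hx hxj
      rcases Nat.eq_or_lt_of_le hx with hc | hc
      · rw [← hc]; exact hcon
      · exact hper x (by omega) hxj
    have : minPeriod t (i - 1) j ≤ p := Nat.sInf_le hmemL
    have := hL hi'
    omega
  constructor
  · intro hcond
    refine ⟨h1, hjn, hp1, hexp', hper, hmin, ?_, hleftNE, hrbNE⟩
    intro hjn'
    rcases hcond with hc | hc
    · omega
    · exact hc
  · intro hcond
    push_neg at hcond
    obtain ⟨hc1, hc2⟩ := hcond
    have hjn' : j < n := by omega
    refine ⟨h1, hjn, hp1, hexp', hper, hmin, ?_, hleftNE, hrbNE⟩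
    intro _
    exact lt_of_le_of_ne hc2 (fun h => hrbNE hjn' h.symm)

theorem main (n : ℕ) (hn : 0 < n) (t : ℕ → α) :
    {ij : ℕ × ℕ | IsRun t n ij.1 ij.2}.ncard < n := by
  classical
  set ltA : α → α → Prop := fun a b => a < b with hltA
  set ltD : α → α → Prop := fun a b => b < a with hltD
  have hasymA : ∀ a b : α, ltA a b → ltA b a → False := fun a b h1 h2 => absurd h1 (asymm h2)
  have hasymD : ∀ a b : α, ltD a b → ltD b a → False := fun a b h1 h2 => hasymA _ _ h2 h1
  have htriA : ∀ a b : α, ltA a b ∨ a = b ∨ ltA b a := fun a b => lt_trichotomy a b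
  have htriD : ∀ a b : α, ltD a b ∨ a = b ∨ ltD b a := by
    intro a b
    rcases lt_trichotomy a b with h | h | h
    · exact Or.inr (Or.inr h)
    · exact Or.inr (Or.inl h)
    · exact Or.inl h
  have htransA : ∀ a b c : α, ltA a b → ltA b c → ltA a c := fun a b c h1 h2 => lt_trans h1 h2
  have htransD : ∀ a b c : α, ltD a b → ltD b c → ltD a c := fun a b c h1 h2 => lt_trans h2 h1
  have hflipDA : ∀ a b : α, ltD a b ↔ ltA b a := fun a b => Iff.rfl
  have hflipAD : ∀ a b : α, ltA a b ↔ ltD b a := fun a b => Iff.rfl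
  set S := {ij : ℕ × ℕ | IsRun t n ij.1 ij.2} with hS
  set cond : ℕ × ℕ → Prop :=
    fun ij => n ≤ ij.2 ∨ t (ij.2 + 1) < t (ij.2 + 1 - minPeriod t ij.1 ij.2) with hcond
  set f : ℕ × ℕ → ℕ := fun ij =>
    if cond ij then pick ltA t ij.1 (minPeriod t ij.1 ij.2)
    else pick ltD t ij.1 (minPeriod t ij.1 ij.2) with hf
  -- for r ∈ S, f r satisfies MinAt for the corresponding order
  have hfm : ∀ r ∈ S, (cond r → DRun ltA t n r.1 r.2 (minPeriod t r.1 r.2) ∧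
        MinAt ltA t r.1 (minPeriod t r.1 r.2) (f r)) ∧
      (¬ cond r → DRun ltD t n r.1 r.2 (minPeriod t r.1 r.2) ∧
        MinAt ltD t r.1 (minPeriod t r.1 r.2) (f r)) := by
    intro r hr
    have hdr := isRun_toDRun t n r.1 r.2 hr
    constructor
    · intro hc
      have hR := hdr.1 hc
      refine ⟨hR, ?_⟩
      have hex := hR.exists_minAt htriA htransA
      have := Classical.epsilon_spec hex
      simpa [hf, hc, pick] using this
    · intro hc
      have hR := hdr.2 hc
      refine ⟨hR, ?_⟩
      have hex := hR.exists_minAt htriD htransD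
      have := Classical.epsilon_spec hex
      simpa [hf, hc, pick] using this
  have hinj : Set.InjOn f S := by
    intro r hr r' hr' hfe
    have h1 := hfm r hr
    have h2 := hfm r' hr'
    by_cases hc : cond r <;> by_cases hc' : cond r'
    · obtain ⟨R, M⟩ := h1.1 hc
      obtain ⟨R', M'⟩ := h2.1 hc'
      rw [hfe] at M
      obtain ⟨e1, e2⟩ := DRun.same_order hasymA htriA R R' M M'
      exact Prod.ext e1 e2
    · exfalso
      obtain ⟨R, M⟩ := h1.1 hc
      obtain ⟨R', M'⟩ := h2.2 hc'
      rw [hfe] at M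
      refine DRun.mixed_main hflipDA hasymA R R' M M' ?_
      right
      simp only [hcond, not_or, not_le] at hc'
      exact hc'.1
    · exfalso
      obtain ⟨R, M⟩ := h1.2 hc
      obtain ⟨R', M'⟩ := h2.1 hc'
      rw [hfe] at M
      refine DRun.mixed_main hflipAD hasymD R R' M M' ?_
      left
      simp only [hcond, not_or, not_le] at hc
      exact hc.1
    · obtain ⟨R, M⟩ := h1.2 hc
      obtain ⟨R', M'⟩ := h2.2 hc'
      rw [hfe] at M
      obtain ⟨e1, e2⟩ := DRun.same_order hasymD htriD R R' M M'
      exact Prod.ext e1 e2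
  have hsub : f '' S ⊆ Set.Icc 2 n := by
    rintro x ⟨r, hr, rfl⟩
    have h1 := hfm r hr
    by_cases hc : cond r
    · obtain ⟨R, M⟩ := h1.1 hc
      obtain ⟨hk1, hkp, hkj, hk2⟩ := R.k_bounds M
      exact ⟨hk2, le_trans hkj R.hjn⟩
    · obtain ⟨R, M⟩ := h1.2 hc
      obtain ⟨hk1, hkp, hkj, hk2⟩ := R.k_bounds M
      exact ⟨hk2, le_trans hkj R.hjn⟩
  calc S.ncard = (f '' S).ncard := (Set.ncard_image_of_injOn hinj).symm
    _ ≤ (Set.Icc 2 n).ncard := Set.ncard_le_ncard hsub (Set.finite_Icc 2 n)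
    _ = n + 1 - 2 := by
        have he : (Set.Icc 2 n) = ↑(Finset.Icc 2 n) := by simp
        rw [he, Set.ncard_coe_finset, Nat.card_Icc]
    _ < n := by omega

end RunsThm

/-- Every string of length `n ≥ 1` contains fewer than `n` runs. -/
theorem number_of_runs_lt_length {α : Type*} [LinearOrder α]
    (n : ℕ) (hn : 0 < n) (t : ℕ → α) :
    {ij : ℕ × ℕ | IsRun t n ij.1 ij.2}.ncard < n :=
  RunsThm.main n hn t
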